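/- Let X be an R[1]-rigid subcategory and L an object admitting a triangle L --x1--> X1 -> X0 --x0--> L[1] with X1, X0 ∈ X. If x0 factors through R[1], then x1 is a left X-approximation of L; moreover L admits a triangle L --x2--> X2 -> X4 --x4--> L[1] with X2, X4 ∈ X, x2 a minimal left X-approximation, and x4 factoring through R[1]. -/

import Mathlib

open CategoryTheory CategoryTheory.Limits CategoryTheory.Pretriangulated

universe v u w

namespace RelCT

/-- Krull–Schmidt: every object decomposes as a finite biproduct of objects with local
endomorphism rings. -/
def KrullSchmidtCat (C : Type u) [Category.{v} C] [Preadditive C] : Prop :=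
  ∀ X : C, ∃ (n : ℕ) (f : Fin n → C) (p : ∀ i, X ⟶ f i) (ι : ∀ i, f i ⟶ X),
    (∀ i, ι i ≫ p i = 𝟙 (f i)) ∧ (∑ i, p i ≫ ι i) = 𝟙 X ∧
    ∀ i (φ : f i ⟶ f i), IsIso φ ∨ IsIso (𝟙 (f i) - φ)

/-- `Fac W`: objects admitting an epimorphism from an object of `W`. -/
def FacSet {Q : Type w} [Category Q] (W : Set Q) : Set Q :=
  {Y | ∃ X ∈ W, ∃ p : X ⟶ Y, Epi p}

/-- `Ext¹(X, F) = 0`, expressed as: every short exact sequence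
`0 → F → E → X → 0` splits. -/
def Ext1Zero {Q : Type w} [Category Q] [Abelian Q] (X F : Q) : Prop :=
  ∀ S : CategoryTheory.ShortComplex Q, S.ShortExact → (S.X₁ ≅ F) → (S.X₃ ≅ X) →
    ∃ r : S.X₂ ⟶ S.X₁, S.f ≫ r = 𝟙 S.X₁

variable {C : Type u} [Category.{v} C] [Preadditive C] [HasZeroObject C]
  [HasShift C ℤ] [∀ n : ℤ, (CategoryTheory.shiftFunctor C n).Additive] [Pretriangulated C]

/-- The shift `D[n]` of a collection of objects, closed under isomorphism. -/
def shiftSet (D : Set C) (n : ℤ) : Set C :=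
  {X | ∃ Y ∈ D, Nonempty (X ≅ Y⟦n⟧)}

/-- `f` factors through an object of `D`. -/
def Factors (D : Set C) {A B : C} (f : A ⟶ B) : Prop :=
  ∃ (Z : C) (g : A ⟶ Z) (h : Z ⟶ B), Z ∈ D ∧ f = g ≫ h

/-- `X * Y`: objects `M` admitting a distinguished triangle `A → M → B → A[1]`
with `A ∈ X`, `B ∈ Y`. -/
def star (X Y : Set C) : Set C :=
  {M | ∃ (A B : C) (f : A ⟶ M) (g : M ⟶ B) (h : B ⟶ A⟦(1:ℤ)⟧),
    A ∈ X ∧ B ∈ Y ∧ (Triangle.mk f g h ∈ distTriang C)}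

/-- `R` is rigid: `Hom(R, R[1]) = 0`. -/
def Rigid (R : Set C) : Prop :=
  ∀ ⦃A B : C⦄, A ∈ R → B ∈ R → ∀ f : A ⟶ B⟦(1:ℤ)⟧, f = 0

/-- `[R[1]](X, Y[1]) = 0` : every morphism from an object of `X` to a first shift of
an object of `Y` which factors through `R[1]` vanishes. -/
def RelRigid (R X Y : Set C) : Prop :=
  ∀ ⦃A B : C⦄, A ∈ X → B ∈ Y → ∀ f : A ⟶ B⟦(1:ℤ)⟧, Factors (shiftSet R 1) f → f = 0

/-- Closure of a collection of objects under finite direct sums and direct summands. -/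
inductive addClosure (D : Set C) : C → Prop
  | of {X : C} : X ∈ D → addClosure D X
  | zero {X : C} : IsZero X → addClosure D X
  | sum {X Y Z : C} : addClosure D X → addClosure D Y →
      (∃ (pX : Z ⟶ X) (pY : Z ⟶ Y) (iX : X ⟶ Z) (iY : Y ⟶ Z),
        iX ≫ pX = 𝟙 X ∧ iY ≫ pY = 𝟙 Y ∧ pX ≫ iX + pY ≫ iY = 𝟙 Z) →
      addClosure D Z
  | smd {X Y : C} : addClosure D Y → (∃ (s : X ⟶ Y) (r : Y ⟶ X), s ≫ r = 𝟙 X) →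
      addClosure D X

/-- `D` is closed under finite direct sums and direct summands. -/
def AddClosed (D : Set C) : Prop := ∀ X : C, addClosure D X → X ∈ D

/-- closed under direct sums (expressed via biproduct data). -/
def SumClosed (D : Set C) : Prop :=
  ∀ ⦃X Y Z : C⦄, X ∈ D → Y ∈ D →
    (∃ (pX : Z ⟶ X) (pY : Z ⟶ Y) (iX : X ⟶ Z) (iY : Y ⟶ Z),
      iX ≫ pX = 𝟙 X ∧ iY ≫ pY = 𝟙 Y ∧ pX ≫ iX + pY ≫ iY = 𝟙 Z) → Z ∈ D

/-- closed under direct summands. -/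
def SummandClosed (D : Set C) : Prop :=
  ∀ ⦃X Y : C⦄, Y ∈ D → (∃ (s : X ⟶ Y) (r : Y ⟶ X), s ≫ r = 𝟙 X) → X ∈ D

/-- closed under isomorphisms. -/
def IsoClosed (D : Set C) : Prop :=
  ∀ ⦃X Y : C⦄, X ∈ D → Nonempty (X ≅ Y) → Y ∈ D

/-- `f : A ⟶ X` is a left `D`-approximation of `A`. -/
def IsLeftApprox (D : Set C) {A X : C} (f : A ⟶ X) : Prop :=
  X ∈ D ∧ ∀ ⦃X' : C⦄, X' ∈ D → ∀ g : A ⟶ X', ∃ h : X ⟶ X', f ≫ h = g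

/-- `f : X ⟶ A` is a right `D`-approximation of `A`. -/
def IsRightApprox (D : Set C) {X A : C} (f : X ⟶ A) : Prop :=
  X ∈ D ∧ ∀ ⦃X' : C⦄, X' ∈ D → ∀ g : X' ⟶ A, ∃ h : X' ⟶ X, h ≫ f = g

/-- `f` is left minimal. -/
def LeftMinimal {A B : C} (f : A ⟶ B) : Prop :=
  ∀ u : B ⟶ B, f ≫ u = f → IsIso u

/-- `f` is right minimal. -/
def RightMinimal {A B : C} (f : A ⟶ B) : Prop :=
  ∀ u : A ⟶ A, u ≫ f = f → IsIso u

/-- `f` lies in the Jacobson radical of the category. -/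
def InRadical {A B : C} (f : A ⟶ B) : Prop :=
  ∀ g : B ⟶ A, IsIso (𝟙 A - f ≫ g)

/-- indecomposable object. -/
def Indec (W : C) : Prop :=
  ¬ IsZero W ∧ ∀ p : W ⟶ W, p ≫ p = p → p = 0 ∨ p = 𝟙 W

/-- two-term `R[1]`-rigid subcategory. -/
def TwoTermRigid (R X : Set C) : Prop :=
  RelRigid R X X ∧ X ⊆ star R (shiftSet R 1)

/-- two-term maximal `R[1]`-rigid subcategory. -/
def TwoTermMaximal (R X : Set C) : Prop :=
  TwoTermRigid R X ∧
  ∀ M ∈ star R (shiftSet R 1),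
    RelRigid R {Z | addClosure (insert M X) Z} {Z | addClosure (insert M X) Z} → M ∈ X

/-- two-term weak `R[1]`-cluster tilting subcategory. -/
def TwoTermWCT (R X : Set C) : Prop :=
  X ⊆ star R (shiftSet R 1) ∧ R ⊆ star (shiftSet X (-1)) X ∧
  ∀ M : C, M ∈ X ↔ (M ∈ star R (shiftSet R 1) ∧ RelRigid R {M} X ∧ RelRigid R X {M})

/-- `R(X) = { R₀ ∈ R | Hom(R₀, X) = 0 }`. -/
def RZero (R X : Set C) : Set C :=
  {A | A ∈ R ∧ ∀ B ∈ X, ∀ f : A ⟶ B, f = 0}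

/-- `X` is `R[1]`-functorially finite. -/
def RFunctoriallyFinite (R X : Set C) : Prop :=
  (∀ R₀ ∈ R, ∃ (X₀ : C) (f : R₀ ⟶ X₀), IsLeftApprox X f) ∧
  (∀ A ∈ shiftSet R 1, ∃ (X₀ : C) (f : X₀ ⟶ A), IsRightApprox X f)

/-- Data of triangles `R₀ → X^{R₀} → V^{R₀} → R₀[1]` with minimal left `X`-approximations,
defining the completion `M_X`. -/
structure MData (R X : Set C) where
  obj : ∀ R₀ : C, R₀ ∈ R → C
  cone : ∀ R₀ : C, R₀ ∈ R → C
  f : ∀ (R₀ : C) (h : R₀ ∈ R), R₀ ⟶ obj R₀ h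
  g : ∀ (R₀ : C) (h : R₀ ∈ R), obj R₀ h ⟶ cone R₀ h
  w : ∀ (R₀ : C) (h : R₀ ∈ R), cone R₀ h ⟶ R₀⟦(1:ℤ)⟧
  tri : ∀ (R₀ : C) (h : R₀ ∈ R), Triangle.mk (f R₀ h) (g R₀ h) (w R₀ h) ∈ distTriang C
  approx : ∀ (R₀ : C) (h : R₀ ∈ R), IsLeftApprox X (f R₀ h)
  minimal : ∀ (R₀ : C) (h : R₀ ∈ R), LeftMinimal (f R₀ h)

/-- `M_X = add (X ∪ {V^R | R ∈ R})`. -/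
def MData.cat {R X : Set C} (d : MData R X) : Set C :=
  {Z | addClosure (X ∪ {V | ∃ (R₀ : C) (h : R₀ ∈ R), V = d.cone R₀ h}) Z}

/-- Data of triangles `R₀ → V_{R₀} → U_{R₀} → R₀[1]` with the last map a right
`X`-approximation, defining the completion `N_X`. -/
structure NData (R X : Set C) where
  cocone : ∀ R₀ : C, R₀ ∈ R → C
  obj : ∀ R₀ : C, R₀ ∈ R → C
  a : ∀ (R₀ : C) (h : R₀ ∈ R), R₀ ⟶ cocone R₀ h
  b : ∀ (R₀ : C) (h : R₀ ∈ R), cocone R₀ h ⟶ obj R₀ h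
  c : ∀ (R₀ : C) (h : R₀ ∈ R), obj R₀ h ⟶ R₀⟦(1:ℤ)⟧
  tri : ∀ (R₀ : C) (h : R₀ ∈ R), Triangle.mk (a R₀ h) (b R₀ h) (c R₀ h) ∈ distTriang C
  approx : ∀ (R₀ : C) (h : R₀ ∈ R), IsRightApprox X (c R₀ h)

/-- `N_X = add (X ∪ {V_R | R ∈ R})`. -/
def NData.cat {R X : Set C} (d : NData R X) : Set C :=
  {Z | addClosure (X ∪ {V | ∃ (R₀ : C) (h : R₀ ∈ R), V = d.cocone R₀ h}) Z}

/-- `(M, N)` is an `X`-mutation pair. -/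
def MutationPair (R X M N : Set C) : Prop :=
  M ≠ N ∧ TwoTermWCT R M ∧ TwoTermWCT R N ∧ X ⊆ M ∧ X ⊆ N ∧
  (∀ Y ∈ M, ∃ (Z X₀ : C) (z : Z ⟶ X₀) (x : X₀ ⟶ Y) (y : Y ⟶ Z⟦(1:ℤ)⟧),
      Z ∈ N ∧ X₀ ∈ X ∧ (Triangle.mk z x y ∈ distTriang C) ∧ Factors (shiftSet R 1) y) ∧
  (∀ Z' ∈ N, ∃ (X' Y' : C) (z' : Z' ⟶ X') (x' : X' ⟶ Y') (y' : Y' ⟶ Z'⟦(1:ℤ)⟧),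
      X' ∈ X ∧ Y' ∈ M ∧ (Triangle.mk z' x' y' ∈ distTriang C) ∧ Factors (shiftSet R 1) y')

/-- almost complete two-term weak `R[1]`-cluster tilting subcategory. -/
def AlmostComplete (R X : Set C) : Prop :=
  TwoTermRigid R X ∧ RFunctoriallyFinite R X ∧
    ∃ W : C, Indec W ∧ W ∉ X ∧ TwoTermWCT R {Z | addClosure (insert W X) Z}

/-- completion of an almost complete subcategory `X`. -/
def IsCompletion (R X U : Set C) : Prop :=
  TwoTermWCT R U ∧ ∃ W : C, Indec W ∧ W ∉ X ∧ U = {Z | addClosure (insert W X) Z}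


/-! ### Auxiliary machinery for minimal approximations (Krull–Schmidt) -/

set_option linter.unusedSectionVars false

/-- objects with local endomorphism ring (in the idempotent dichotomy form). -/
def LocalObj (A : C) : Prop := ∀ φ : A ⟶ A, IsIso φ ∨ IsIso (𝟙 A - φ)

lemma isIso_one_sub_swap {P Q : C} (x : P ⟶ Q) (y : Q ⟶ P)
    (h : IsIso (𝟙 Q - y ≫ x)) : IsIso (𝟙 P - x ≫ y) := by
  set u := inv (𝟙 Q - y ≫ x) with hu_def
  have h1 : y ≫ x ≫ u = u - 𝟙 Q := by
    have := IsIso.hom_inv_id (𝟙 Q - y ≫ x)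
    rw [Preadditive.sub_comp, Category.id_comp, Category.assoc] at this
    rw [← hu_def] at this
    linear_combination (norm := abel) -this
  have h2 : u ≫ y ≫ x = u - 𝟙 Q := by
    have := IsIso.inv_hom_id (𝟙 Q - y ≫ x)
    rw [Preadditive.comp_sub, Category.comp_id] at this
    rw [← hu_def] at this
    linear_combination (norm := abel) -this
  refine ⟨𝟙 P + x ≫ u ≫ y, ?_, ?_⟩
  · have e1 : x ≫ y ≫ x ≫ u ≫ y = x ≫ u ≫ y - x ≫ y := by
      rw [show y ≫ x ≫ u ≫ y = (y ≫ x ≫ u) ≫ y by simp [Category.assoc], h1]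
      simp [Preadditive.sub_comp, Category.assoc]
    simp only [Preadditive.sub_comp, Preadditive.comp_add, Category.id_comp, Category.comp_id,
      Category.assoc]
    rw [show x ≫ y ≫ x ≫ u ≫ y = x ≫ u ≫ y - x ≫ y from e1]
    abel
  · have e1 : x ≫ u ≫ y ≫ x ≫ y = x ≫ u ≫ y - x ≫ y := by
      rw [show u ≫ y ≫ x ≫ y = (u ≫ y ≫ x) ≫ y by simp [Category.assoc], h2]
      simp [Preadditive.sub_comp, Category.assoc]
    simp only [Preadditive.add_comp, Preadditive.comp_sub, Category.id_comp, Category.comp_id,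
      Category.assoc]
    rw [show x ≫ u ≫ y ≫ x ≫ y = x ≫ u ≫ y - x ≫ y from e1]
    abel


lemma inRadical_comp {A B A' B' : C} {f : A ⟶ B} (hf : InRadical f)
    (x : A' ⟶ A) (y : B ⟶ B') : InRadical (x ≫ f ≫ y) := by
  intro g
  have h1 : IsIso (𝟙 A - f ≫ (y ≫ g ≫ x)) := hf _
  have h2 : IsIso (𝟙 A' - x ≫ (f ≫ y ≫ g)) := by
    refine isIso_one_sub_swap _ _ ?_
    simpa only [Category.assoc] using h1
  simpa only [Category.assoc] using h2

lemma inRadical_add {A B : C} {f f' : A ⟶ B} (hf : InRadical f) (hf' : InRadical f') :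
    InRadical (f + f') := by
  intro g
  have h1 : IsIso (𝟙 A - f ≫ g) := hf g
  have h2 : IsIso (𝟙 A - (f' ≫ g) ≫ inv (𝟙 A - f ≫ g)) := by
    simpa only [Category.assoc] using hf' (g ≫ inv (𝟙 A - f ≫ g))
  have h3 : IsIso (𝟙 A - inv (𝟙 A - f ≫ g) ≫ (f' ≫ g)) := isIso_one_sub_swap _ _ h2
  have key : 𝟙 A - (f + f') ≫ g =
      (𝟙 A - f ≫ g) ≫ (𝟙 A - inv (𝟙 A - f ≫ g) ≫ (f' ≫ g)) := by
    rw [Preadditive.comp_sub, Category.comp_id, ← Category.assoc, IsIso.hom_inv_id,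
      Category.id_comp, Preadditive.add_comp]
    abel
  rw [key]
  infer_instance

lemma inRadical_zero {A B : C} : InRadical (0 : A ⟶ B) := by
  intro g
  simp only [Limits.zero_comp, sub_zero]
  infer_instance

lemma inRadical_sum {A B : C} {ι : Type*} (s : Finset ι) (f : ι → (A ⟶ B))
    (h : ∀ i ∈ s, InRadical (f i)) : InRadical (∑ i ∈ s, f i) := by
  classical
  induction s using Finset.induction with
  | empty => simpa using (inRadical_zero : InRadical (0 : A ⟶ B))
  | @insert a s ha ih =>
      rw [Finset.sum_insert ha]
      exact inRadical_add (h _ (Finset.mem_insert_self _ _))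
        (ih fun i hi => h i (Finset.mem_insert_of_mem hi))


lemma LocalObj.radical_or_split {A : C} (hA : LocalObj A) {B : C} (f : A ⟶ B) :
    InRadical f ∨ ∃ g : B ⟶ A, IsIso (f ≫ g) := by
  by_cases h : InRadical f
  · exact Or.inl h
  · right
    simp only [InRadical, not_forall] at h
    obtain ⟨g, hg⟩ := h
    rcases hA (f ≫ g) with h' | h'
    · exact ⟨g, h'⟩
    · exact absurd h' hg

lemma exists_isIso_of_sum_isIso {B : C} (hB : ¬ IsZero B) (hloc : LocalObj B)
    {ι : Type*} (s : Finset ι) (f : ι → (B ⟶ B)) (h : IsIso (∑ i ∈ s, f i)) :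
    ∃ i ∈ s, IsIso (f i) := by
  classical
  induction s using Finset.induction with
  | empty =>
      exfalso
      apply hB
      rw [Limits.IsZero.iff_id_eq_zero]
      calc 𝟙 B = inv (∑ i ∈ (∅ : Finset ι), f i) ≫ (∑ i ∈ (∅ : Finset ι), f i) :=
            (IsIso.inv_hom_id _).symm
        _ = 0 := by simp
  | @insert a s ha ih =>
      rw [Finset.sum_insert ha] at h
      set T := f a + ∑ i ∈ s, f i with hT
      rcases hloc (f a ≫ inv T) with h' | h'
      · refine ⟨a, Finset.mem_insert_self _ _, ?_⟩
        have : IsIso ((f a ≫ inv T) ≫ T) := inferInstance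
        simpa [Category.assoc] using this
      · have hS : 𝟙 B - f a ≫ inv T = (∑ i ∈ s, f i) ≫ inv T := by
          have h0 : (f a + ∑ i ∈ s, f i) ≫ inv T = 𝟙 B := by
            rw [← hT]; exact IsIso.hom_inv_id _
          rw [Preadditive.add_comp] at h0
          linear_combination (norm := abel) -h0
        rw [hS] at h'
        have : IsIso (((∑ i ∈ s, f i) ≫ inv T) ≫ T) := inferInstance
        have h'' : IsIso (∑ i ∈ s, f i) := by simpa [Category.assoc] using this
        obtain ⟨i, hi, hii⟩ := ih h''
        exact ⟨i, Finset.mem_insert_of_mem hi, hii⟩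


/-- step 1: find a local summand on which `f` vanishes, given failure of minimality. -/
lemma exists_proj_of_w {n : ℕ} {L M : C} (f : L ⟶ M)
    (N : Fin n → C) (p : ∀ i, M ⟶ N i) (ι : ∀ i, N i ⟶ M)
    (hsum : (∑ i, p i ≫ ι i) = 𝟙 M) (hloc : ∀ i, LocalObj (N i))
    (w : M ⟶ M) (hfw : f ≫ w = 0) (hw : ¬ IsIso (𝟙 M - w)) :
    ∃ (j : Fin n) (π : M ⟶ N j), ι j ≫ π = 𝟙 (N j) ∧ f ≫ π = 0 := by
  classical
  have hex : ∃ j k, ¬ InRadical (ι j ≫ w ≫ p k) := by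
    by_contra hall
    push_neg at hall
    have hw2 : (∑ j, ∑ k, p j ≫ (ι j ≫ w ≫ p k) ≫ ι k) = w := by
      calc (∑ j, ∑ k, p j ≫ (ι j ≫ w ≫ p k) ≫ ι k)
          = (∑ i, p i ≫ ι i) ≫ w ≫ (∑ i, p i ≫ ι i) := by
            simp only [Preadditive.sum_comp, Preadditive.comp_sum, Category.assoc]
            rw [Finset.sum_comm]
        _ = w := by rw [hsum]; simp
    have hwrad : InRadical w := by
      rw [← hw2]
      refine inRadical_sum _ _ fun j _ => inRadical_sum _ _ fun k _ => ?_
      exact inRadical_comp (hall j k) _ _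
    have := hwrad (𝟙 M)
    rw [Category.comp_id] at this
    exact hw this
  obtain ⟨j, k, hjk⟩ := hex
  rcases (hloc j).radical_or_split (ι j ≫ w ≫ p k) with h | ⟨g, hg⟩
  · exact absurd h hjk
  · refine ⟨j, w ≫ p k ≫ g ≫ inv ((ι j ≫ w ≫ p k) ≫ g), ?_, ?_⟩
    · calc ι j ≫ w ≫ p k ≫ g ≫ inv ((ι j ≫ w ≫ p k) ≫ g)
          = ((ι j ≫ w ≫ p k) ≫ g) ≫ inv ((ι j ≫ w ≫ p k) ≫ g) := by
            simp only [Category.assoc]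
        _ = 𝟙 (N j) := IsIso.hom_inv_id _
    · rw [← Category.assoc, hfw, Limits.zero_comp]

/-- weak Krull-Schmidt data with nonzero local summands. -/
def WDat (n : ℕ) (M : C) : Prop :=
  ∃ (N : Fin n → C) (p : ∀ i, M ⟶ N i) (ι : ∀ i, N i ⟶ M),
    (∑ i, p i ≫ ι i) = 𝟙 M ∧ (∀ i, LocalObj (N i)) ∧ (∀ i, ¬ IsZero (N i))

lemma wdat_drop : ∀ (n : ℕ) (M : C) (N : Fin n → C) (p : ∀ i, M ⟶ N i) (ι : ∀ i, N i ⟶ M),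
    (∑ i, p i ≫ ι i) = 𝟙 M → (∀ i, LocalObj (N i)) → ∃ m, WDat m M := by
  intro n
  induction n with
  | zero => exact fun M N p ι hsum hloc => ⟨0, N, p, ι, hsum, hloc, fun i => i.elim0⟩
  | succ n ih =>
      intro M N p ι hsum hloc
      by_cases hz : ∀ i, ¬ IsZero (N i)
      · exact ⟨n + 1, N, p, ι, hsum, hloc, hz⟩
      · push_neg at hz
        obtain ⟨j, hj⟩ := hz
        refine ih M (fun k => N (j.succAbove k)) (fun k => p _) (fun k => ι _) ?_
          (fun k => hloc _)
        have h0 : p j ≫ ι j = 0 := by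
          rw [hj.eq_of_src (ι j) 0, Limits.comp_zero]
        have := Fin.sum_univ_succAbove (fun i => p i ≫ ι i) j
        rw [hsum, h0, zero_add] at this
        exact this.symm


lemma retract_iso_of_local {B X : C} (hX : LocalObj X) (hB : ¬ IsZero B)
    (s : B ⟶ X) (r : X ⟶ B) (hsr : s ≫ r = 𝟙 B) : r ≫ s = 𝟙 X := by
  have hidem : (r ≫ s) ≫ (r ≫ s) = r ≫ s := by
    calc (r ≫ s) ≫ r ≫ s = r ≫ (s ≫ r) ≫ s := by simp only [Category.assoc]
      _ = r ≫ s := by rw [hsr, Category.id_comp]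
  rcases hX (r ≫ s) with h | h
  · calc r ≫ s = (inv (r ≫ s) ≫ (r ≫ s)) ≫ (r ≫ s) := by
          rw [IsIso.inv_hom_id, Category.id_comp]
      _ = inv (r ≫ s) ≫ ((r ≫ s) ≫ (r ≫ s)) := by simp only [Category.assoc]
      _ = inv (r ≫ s) ≫ (r ≫ s) := by rw [hidem]
      _ = 𝟙 X := IsIso.inv_hom_id _
  · exfalso
    apply hB
    rw [Limits.IsZero.iff_id_eq_zero]
    have hz : r ≫ s = 0 := by
      have h0 : (r ≫ s) ≫ (𝟙 X - r ≫ s) = 0 := by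
        rw [Preadditive.comp_sub, Category.comp_id, hidem, sub_self]
      calc r ≫ s = ((r ≫ s) ≫ (𝟙 X - r ≫ s)) ≫ inv (𝟙 X - r ≫ s) := by
            rw [Category.assoc, IsIso.hom_inv_id, Category.comp_id]
        _ = 0 := by rw [h0, Limits.zero_comp]
    calc 𝟙 B = (s ≫ r) ≫ (s ≫ r) := by rw [hsr, Category.id_comp]
      _ = s ≫ (r ≫ s) ≫ r := by simp only [Category.assoc]
      _ = 0 := by rw [hz, Limits.zero_comp, Limits.comp_zero]

/-- the exchange lemma: cancelling a nonzero local direct summand. -/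
lemma exchange {n : ℕ} (hn : 0 < n) {M A B : C}
    (β : B ⟶ M) (b : M ⟶ B) (α : A ⟶ M) (a : M ⟶ A)
    (hβb : β ≫ b = 𝟙 B) (hαa : α ≫ a = 𝟙 A) (hαb : α ≫ b = 0)
    (hBl : LocalObj B) (hBnz : ¬ IsZero B)
    (N : Fin n → C) (p : ∀ i, M ⟶ N i) (ι : ∀ i, N i ⟶ M)
    (hsum : (∑ i, p i ≫ ι i) = 𝟙 M) (hloc : ∀ i, LocalObj (N i))
    (hnz : ∀ i, ¬ IsZero (N i)) : WDat (n - 1) A := by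
  classical
  obtain ⟨m, rfl⟩ : ∃ m, n = m + 1 := ⟨n - 1, (Nat.succ_pred_eq_of_pos hn).symm⟩
  have h1 : IsIso (∑ i, β ≫ p i ≫ ι i ≫ b) := by
    have he : (∑ i, β ≫ p i ≫ ι i ≫ b) = 𝟙 B := by
      calc (∑ i, β ≫ p i ≫ ι i ≫ b) = β ≫ (∑ i, p i ≫ ι i) ≫ b := by
            simp only [Preadditive.comp_sum, Preadditive.sum_comp, Category.assoc]
        _ = 𝟙 B := by rw [hsum, Category.id_comp, hβb]
    rw [he]; infer_instance
  obtain ⟨i₀, -, hiso⟩ := exists_isIso_of_sum_isIso hBnz hBl Finset.univ _ h1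
  set ψ : B ⟶ B := β ≫ p i₀ ≫ ι i₀ ≫ b with hψ
  -- the split mono/epi pair between B and N i₀
  have hsr : (β ≫ p i₀) ≫ (ι i₀ ≫ b ≫ inv ψ) = 𝟙 B := by
    have h0 : (β ≫ p i₀ ≫ ι i₀ ≫ b) ≫ inv ψ = 𝟙 B := by
      rw [← hψ]; exact IsIso.hom_inv_id ψ
    simpa only [Category.assoc] using h0
  have hrs : (ι i₀ ≫ b ≫ inv ψ) ≫ (β ≫ p i₀) = 𝟙 (N i₀) :=
    retract_iso_of_local (hloc i₀) hBnz _ _ hsr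
  -- reassociated rewriting lemmas
  have K1 : ∀ {Z : C} (h : B ⟶ Z), β ≫ p i₀ ≫ ι i₀ ≫ b ≫ inv ψ ≫ h = h := by
    intro Z h
    have := congrArg (· ≫ h) hsr
    simpa only [Category.assoc, Category.id_comp] using this
  have K2 : ∀ {Z : C} (h : N i₀ ⟶ Z), ι i₀ ≫ b ≫ inv ψ ≫ β ≫ p i₀ ≫ h = h := by
    intro Z h
    have := congrArg (· ≫ h) hrs
    simpa only [Category.assoc, Category.id_comp] using this
  have K3 : ∀ {Z : C} (h : B ⟶ Z), β ≫ b ≫ h = h := by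
    intro Z h
    have := congrArg (· ≫ h) hβb
    simpa only [Category.assoc, Category.id_comp] using this
  have hrs' : ι i₀ ≫ b ≫ inv ψ ≫ β ≫ p i₀ = 𝟙 (N i₀) := by
    simpa only [Category.assoc] using hrs
  -- the idempotents
  set E : M ⟶ M := b ≫ β with hE
  set E' : M ⟶ M := p i₀ ≫ ι i₀ ≫ b ≫ inv ψ ≫ β with hE'
  have hEE : E ≫ E = E := by
    rw [hE]; simp only [Category.assoc]; rw [K3]
  have hE'E' : E' ≫ E' = E' := by
    rw [hE']; simp only [Category.assoc]; rw [K2]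
  have hEE' : E ≫ E' = E := by
    rw [hE, hE']; simp only [Category.assoc]; rw [K1]
  have hE'E : E' ≫ E = E' := by
    rw [hE', hE]; simp only [Category.assoc]; rw [K3]
  set U : M ⟶ M := 𝟙 M + E - E' with hU
  set V : M ⟶ M := 𝟙 M - E + E' with hV
  have hUV : U ≫ V = 𝟙 M := by
    rw [hU, hV]
    simp only [Preadditive.add_comp, Preadditive.sub_comp, Preadditive.comp_add,
      Preadditive.comp_sub, Category.id_comp, Category.comp_id, hEE, hE'E', hEE', hE'E]
    abel
  have hαE : α ≫ E = 0 := by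
    rw [hE, ← Category.assoc, hαb, Limits.zero_comp]
  have hαE' : α ≫ E' ≫ p i₀ = α ≫ p i₀ := by
    rw [hE']
    simp only [Category.assoc]
    rw [hrs', Category.comp_id]
  have hαup0 : α ≫ U ≫ p i₀ = 0 := by
    have hexp : α ≫ U ≫ p i₀ = α ≫ p i₀ + (α ≫ E) ≫ p i₀ - α ≫ E' ≫ p i₀ := by
      rw [hU]
      simp only [Preadditive.add_comp, Preadditive.sub_comp, Preadditive.comp_add,
        Preadditive.comp_sub, Category.id_comp, Category.assoc]
    rw [hexp, hαE, Limits.zero_comp, hαE']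
    abel
  -- sum over the complement
  have hs : (∑ k : Fin m, p (i₀.succAbove k) ≫ ι (i₀.succAbove k)) = 𝟙 M - p i₀ ≫ ι i₀ := by
    have h0 := Fin.sum_univ_succAbove (fun i => p i ≫ ι i) i₀
    rw [hsum] at h0
    linear_combination (norm := abel) -h0
  show WDat m A
  refine ⟨fun k => N (i₀.succAbove k), fun k => α ≫ U ≫ p (i₀.succAbove k),
    fun k => ι (i₀.succAbove k) ≫ V ≫ a, ?_, fun k => hloc _, fun k => hnz _⟩
  have h1' : α ≫ U ≫ V ≫ a = 𝟙 A := by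
    rw [show U ≫ V ≫ a = (U ≫ V) ≫ a by rw [Category.assoc], hUV, Category.id_comp, hαa]
  have h2' : α ≫ U ≫ p i₀ ≫ ι i₀ ≫ V ≫ a = 0 := by
    rw [show α ≫ U ≫ p i₀ ≫ ι i₀ ≫ V ≫ a = (α ≫ U ≫ p i₀) ≫ ι i₀ ≫ V ≫ a by
      simp only [Category.assoc], hαup0, Limits.zero_comp]
  calc (∑ k : Fin m, (α ≫ U ≫ p (i₀.succAbove k)) ≫ (ι (i₀.succAbove k) ≫ V ≫ a))
      = α ≫ U ≫ (∑ k : Fin m, p (i₀.succAbove k) ≫ ι (i₀.succAbove k)) ≫ V ≫ a := by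
        simp only [Preadditive.comp_sum, Preadditive.sum_comp, Category.assoc]
    _ = α ≫ U ≫ V ≫ a - α ≫ U ≫ p i₀ ≫ ι i₀ ≫ V ≫ a := by
        rw [hs]
        simp only [Preadditive.sub_comp, Preadditive.comp_sub, Category.id_comp, Category.assoc]
    _ = 𝟙 A := by rw [h1', h2', sub_zero]


/-- Splitting off a split mono as a direct summand with orthogonal data,
using the pretriangulated structure. -/
lemma split_complement {A M : C} (σ : A ⟶ M) (π : M ⟶ A) (hσπ : σ ≫ π = 𝟙 A) :
    ∃ (Q : C) (q : M ⟶ Q) (u : Q ⟶ M),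
      u ≫ q = 𝟙 Q ∧ σ ≫ q = 0 ∧ u ≫ π = 0 ∧ π ≫ σ + q ≫ u = 𝟙 M := by
  obtain ⟨Q, q, δ, hTQ⟩ := distinguished_cocone_triangle σ
  have hσq : σ ≫ q = 0 := comp_distTriang_mor_zero₁₂ _ hTQ
  have hδ : δ = 0 := by
    have h31 : δ ≫ (shiftFunctor C (1:ℤ)).map σ = 0 := comp_distTriang_mor_zero₃₁ _ hTQ
    calc δ = δ ≫ (shiftFunctor C (1:ℤ)).map (σ ≫ π) := by rw [hσπ]; simp
      _ = (δ ≫ (shiftFunctor C (1:ℤ)).map σ) ≫ (shiftFunctor C (1:ℤ)).map π := by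
          rw [Functor.map_comp, Category.assoc]
      _ = 0 := by rw [h31, Limits.zero_comp]
  obtain ⟨u₀, hu₀⟩ : ∃ u₀ : Q ⟶ M, 𝟙 Q = u₀ ≫ q := Triangle.coyoneda_exact₂ _ (rot_of_distTriang _ hTQ) (𝟙 Q)
    (by change 𝟙 Q ≫ δ = 0; rw [hδ, Limits.comp_zero])
  change 𝟙 Q = u₀ ≫ q at hu₀
  -- hu₀ : 𝟙 Q = u₀ ≫ q
  obtain ⟨t, ht⟩ : ∃ t : Q ⟶ M, 𝟙 M - π ≫ σ = q ≫ t := Triangle.yoneda_exact₂ _ hTQ (𝟙 M - π ≫ σ)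
    (by change σ ≫ (𝟙 M - π ≫ σ) = 0; rw [Preadditive.comp_sub, Category.comp_id, ← Category.assoc, hσπ,
        Category.id_comp, sub_self])
  -- ht : 𝟙 M - π ≫ σ = q ≫ t
  refine ⟨Q, q, u₀ ≫ (𝟙 M - π ≫ σ), ?_, hσq, ?_, ?_⟩
  · have h1 : (𝟙 M - π ≫ σ) ≫ q = q := by
      rw [Preadditive.sub_comp, Category.id_comp, Category.assoc, hσq, Limits.comp_zero, sub_zero]
    rw [Category.assoc, h1, ← hu₀]
  · have h1 : (𝟙 M - π ≫ σ) ≫ π = 0 := by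
      rw [Preadditive.sub_comp, Category.id_comp, Category.assoc, hσπ, Category.comp_id, sub_self]
    rw [Category.assoc, h1, Limits.comp_zero]
  · have hqu : q ≫ u₀ ≫ (𝟙 M - π ≫ σ) = 𝟙 M - π ≫ σ := by
      rw [ht]
      calc q ≫ u₀ ≫ q ≫ t = (q ≫ (u₀ ≫ q)) ≫ t := by simp only [Category.assoc]
        _ = q ≫ t := by rw [← hu₀, Category.comp_id]
    rw [hqu]
    abel

lemma exists_minimal_version (hKS : KrullSchmidtCat C) {L M : C} (f : L ⟶ M) :
    ∃ (M₂ : C) (σ : M₂ ⟶ M) (ρ : M ⟶ M₂),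
      (∃ (s : M₂ ⟶ M) (r : M ⟶ M₂), s ≫ r = 𝟙 M₂) ∧
      f ≫ ρ ≫ σ = f ∧ LeftMinimal (f ≫ ρ) := by
  classical
  set P : ℕ → Prop := fun n => ∃ (M₂ : C) (σ : M₂ ⟶ M) (ρ : M ⟶ M₂),
      (∃ (s : M₂ ⟶ M) (r : M ⟶ M₂), s ≫ r = 𝟙 M₂) ∧ f ≫ ρ ≫ σ = f ∧ WDat n M₂ with hP_def
  have hP : ∃ n, P n := by
    obtain ⟨n0, N, p, ι, hpi, hsum, hloc⟩ := hKS M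
    obtain ⟨m, hm⟩ := wdat_drop n0 M N p ι hsum hloc
    exact ⟨m, M, 𝟙 M, 𝟙 M, ⟨𝟙 M, 𝟙 M, by simp⟩, by simp, hm⟩
  obtain ⟨n, hn, hmin⟩ : ∃ n, P n ∧ ∀ k, k < n → ¬ P k :=
    ⟨Nat.find hP, Nat.find_spec hP, fun k hk => Nat.find_min hP hk⟩
  obtain ⟨M₂, σ, ρ, hretr, hfρσ, N, p, ι, hsum, hloc, hnz⟩ := hn
  refine ⟨M₂, σ, ρ, hretr, hfρσ, ?_⟩
  intro u hu
  by_contra hni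
  -- n must be positive
  have hn0 : 0 < n := by
    rcases Nat.eq_zero_or_pos n with h0 | h0
    · exfalso
      subst h0
      have hid : 𝟙 M₂ = 0 := by
        rw [← hsum]; simp
      apply hni
      have : u = 𝟙 M₂ := by
        calc u = u ≫ 𝟙 M₂ := (Category.comp_id u).symm
          _ = 0 := by rw [hid, Limits.comp_zero]
          _ = 𝟙 M₂ := hid.symm
      rw [this]; infer_instance
    · exact h0
  have hfw : (f ≫ ρ) ≫ (𝟙 M₂ - u) = 0 := by
    rw [Preadditive.comp_sub, Category.comp_id, hu, sub_self]
  have hwni : ¬ IsIso (𝟙 M₂ - (𝟙 M₂ - u)) := by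
    simpa using hni
  obtain ⟨j, π, hjπ, hfπ⟩ := exists_proj_of_w (f ≫ ρ) N p ι hsum hloc _ hfw hwni
  obtain ⟨Q, q, u', hu'q, hσq, hu'π, hsum2⟩ := split_complement (ι j) π hjπ
  have hf2 : ((f ≫ ρ) ≫ q) ≫ u' = f ≫ ρ := by
    have : (f ≫ ρ) ≫ (π ≫ ι j + q ≫ u') = f ≫ ρ := by
      rw [hsum2, Category.comp_id]
    rw [Preadditive.comp_add, ← Category.assoc, hfπ, Limits.zero_comp, zero_add,
      ← Category.assoc] at this
    exact this
  have hQ : WDat (n - 1) Q :=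
    exchange hn0 (ι j) π u' q hjπ hu'q hu'π (hloc j) (hnz j) N p ι hsum hloc hnz
  apply hmin (n - 1) (by omega)
  obtain ⟨s, r, hsr⟩ := hretr
  refine ⟨Q, u' ≫ σ, ρ ≫ q, ⟨u' ≫ s, r ≫ q, ?_⟩, ?_, hQ⟩
  · calc (u' ≫ s) ≫ r ≫ q = u' ≫ (s ≫ r) ≫ q := by simp only [Category.assoc]
      _ = u' ≫ q := by rw [hsr, Category.id_comp]
      _ = 𝟙 Q := hu'q
  · calc f ≫ (ρ ≫ q) ≫ u' ≫ σ = (((f ≫ ρ) ≫ q) ≫ u') ≫ σ := by simp only [Category.assoc]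
      _ = (f ≫ ρ) ≫ σ := by rw [hf2]
      _ = f := by rw [Category.assoc]; exact hfρσ



theorem statement_6 (hKS : KrullSchmidtCat C) (R X : Set C)
    (hrig : Rigid R) (haddX : AddClosed X) (hXrig : RelRigid R X X)
    {L X₁ X₀ : C} (hX₁ : X₁ ∈ X) (hX₀ : X₀ ∈ X)
    (x₁ : L ⟶ X₁) (g : X₁ ⟶ X₀) (x₀ : X₀ ⟶ L⟦(1:ℤ)⟧)
    (hT : Triangle.mk x₁ g x₀ ∈ distTriang C)
    (hfac : Factors (shiftSet R 1) x₀) :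
    IsLeftApprox X x₁ ∧
      ∃ (X₂ X₄ : C) (x₂ : L ⟶ X₂) (g' : X₂ ⟶ X₄) (x₄ : X₄ ⟶ L⟦(1:ℤ)⟧),
        X₂ ∈ X ∧ X₄ ∈ X ∧ (Triangle.mk x₂ g' x₄ ∈ distTriang C) ∧
        IsLeftApprox X x₂ ∧ LeftMinimal x₂ ∧ Factors (shiftSet R 1) x₄ := by
  have happrox : IsLeftApprox X x₁ := by
    refine ⟨hX₁, ?_⟩
    intro X' hX' g'
    have hvan : x₀ ≫ (shiftFunctor C (1:ℤ)).map g' = 0 := by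
      obtain ⟨Z, ga, gb, hZ, hx0⟩ := hfac
      exact hXrig hX₀ hX' _ ⟨Z, ga, gb ≫ (shiftFunctor C (1:ℤ)).map g', hZ,
        by rw [hx0, Category.assoc]⟩
    obtain ⟨h, hh⟩ : ∃ h : X₁⟦(1:ℤ)⟧ ⟶ X'⟦(1:ℤ)⟧, (shiftFunctor C (1:ℤ)).map g' = (-(shiftFunctor C (1:ℤ)).map x₁) ≫ h := Triangle.yoneda_exact₂ _
      (rot_of_distTriang _ (rot_of_distTriang _ hT)) ((shiftFunctor C (1:ℤ)).map g')
      (by exact hvan)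
    change (shiftFunctor C (1:ℤ)).map g' = (-(shiftFunctor C (1:ℤ)).map x₁) ≫ h at hh
    obtain ⟨h₀, hh₀⟩ := (shiftFunctor C (1:ℤ)).map_surjective (-h)
    refine ⟨h₀, (shiftFunctor C (1:ℤ)).map_injective ?_⟩
    rw [CategoryTheory.Functor.map_comp, hh₀, hh]
    simp only [Preadditive.neg_comp, Preadditive.comp_neg, neg_neg]
  refine ⟨happrox, ?_⟩
  obtain ⟨M₂, σ, ρ, ⟨s, r, hsr⟩, hfρσ, hmin⟩ := exists_minimal_version hKS x₁
  have hM₂ : M₂ ∈ X := haddX M₂ (addClosure.smd (addClosure.of hX₁) ⟨s, r, hsr⟩)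
  obtain ⟨X₄, g₂, x₄, hT₂⟩ := distinguished_cocone_triangle (x₁ ≫ ρ)
  obtain ⟨c, hc1, hc2⟩ : ∃ c : X₄ ⟶ X₀, g₂ ≫ c = σ ≫ g ∧ x₄ ≫ (shiftFunctor C (1:ℤ)).map (𝟙 L) = c ≫ x₀ := complete_distinguished_triangle_morphism
    (Triangle.mk (x₁ ≫ ρ) g₂ x₄) (Triangle.mk x₁ g x₀) hT₂ hT (𝟙 L) σ
    (by change (x₁ ≫ ρ) ≫ σ = 𝟙 L ≫ x₁; rw [Category.id_comp, Category.assoc]; exact hfρσ)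
  obtain ⟨c', hc1', hc2'⟩ : ∃ c' : X₀ ⟶ X₄, g ≫ c' = ρ ≫ g₂ ∧ x₀ ≫ (shiftFunctor C (1:ℤ)).map (𝟙 L) = c' ≫ x₄ := complete_distinguished_triangle_morphism
    (Triangle.mk x₁ g x₀) (Triangle.mk (x₁ ≫ ρ) g₂ x₄) hT hT₂ (𝟙 L) ρ
    (by change x₁ ≫ ρ = 𝟙 L ≫ (x₁ ≫ ρ); rw [Category.id_comp])
  change g₂ ≫ c = σ ≫ g at hc1
  change x₄ ≫ (shiftFunctor C (1:ℤ)).map (𝟙 L) = c ≫ x₀ at hc2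
  change g ≫ c' = ρ ≫ g₂ at hc1'
  change x₀ ≫ (shiftFunctor C (1:ℤ)).map (𝟙 L) = c' ≫ x₄ at hc2'
  rw [CategoryTheory.Functor.map_id, Category.comp_id] at hc2 hc2'
  -- hc2 : x₄ = c ≫ x₀, hc2' : x₀ = c' ≫ x₄
  have hiso : IsIso (σ ≫ ρ) := by
    apply hmin
    calc (x₁ ≫ ρ) ≫ σ ≫ ρ = (x₁ ≫ ρ ≫ σ) ≫ ρ := by simp only [Category.assoc]
      _ = x₁ ≫ ρ := by rw [hfρσ]
  have hφ : IsIso (c ≫ c') := by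
    refine isIso₃_of_isIso₁₂
      ({ hom₁ := 𝟙 L, hom₂ := σ ≫ ρ, hom₃ := c ≫ c',
         comm₁ := ?_, comm₂ := ?_, comm₃ := ?_ } :
        Triangle.mk (x₁ ≫ ρ) g₂ x₄ ⟶ Triangle.mk (x₁ ≫ ρ) g₂ x₄) hT₂ hT₂
      (by change IsIso (𝟙 L); infer_instance) (by change IsIso (σ ≫ ρ); exact hiso)
    · change (x₁ ≫ ρ) ≫ σ ≫ ρ = 𝟙 L ≫ (x₁ ≫ ρ)
      rw [Category.id_comp]
      calc (x₁ ≫ ρ) ≫ σ ≫ ρ = (x₁ ≫ ρ ≫ σ) ≫ ρ := by simp only [Category.assoc]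
        _ = x₁ ≫ ρ := by rw [hfρσ]
    · change g₂ ≫ c ≫ c' = (σ ≫ ρ) ≫ g₂
      calc g₂ ≫ c ≫ c' = (g₂ ≫ c) ≫ c' := by rw [Category.assoc]
        _ = σ ≫ g ≫ c' := by rw [hc1, Category.assoc]
        _ = σ ≫ ρ ≫ g₂ := by rw [hc1']
        _ = (σ ≫ ρ) ≫ g₂ := by rw [Category.assoc]
    · change x₄ ≫ (shiftFunctor C (1:ℤ)).map (𝟙 L) = (c ≫ c') ≫ x₄
      rw [CategoryTheory.Functor.map_id, Category.comp_id, Category.assoc, ← hc2', hc2]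
  have hX₄ : X₄ ∈ X := by
    refine haddX X₄ (addClosure.smd (addClosure.of hX₀) ⟨c, c' ≫ inv (c ≫ c'), ?_⟩)
    rw [← Category.assoc]
    exact IsIso.hom_inv_id _
  refine ⟨M₂, X₄, x₁ ≫ ρ, g₂, x₄, hM₂, hX₄, hT₂, ⟨hM₂, ?_⟩, hmin, ?_⟩
  · intro X' hX' g'
    obtain ⟨h, hh⟩ := happrox.2 hX' g'
    refine ⟨σ ≫ h, ?_⟩
    calc (x₁ ≫ ρ) ≫ σ ≫ h = (x₁ ≫ ρ ≫ σ) ≫ h := by simp only [Category.assoc]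
      _ = g' := by rw [hfρσ, hh]
  · obtain ⟨Z, ga, gb, hZ, hx0⟩ := hfac
    exact ⟨Z, c ≫ ga, gb, hZ, by rw [hc2, hx0, Category.assoc]⟩



end RelCT
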